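/- arXiv:2111.06985 — 2 statements merged into one kernel-verified Lean document; each statement's English description precedes it below -/
import Mathlib

section
/- Let Y be an n×p real matrix such that the smallest eigenvalue of YYᵀ satisfies λ_min(YYᵀ) ≥ δp for some δ > 0. Then ‖Y(I_p + YᵀY)⁻¹Yᵀ - I_n‖₂ ≤ 1/(1 + δp), where ‖·‖₂ is the spectral norm. -/
open Matrix
open scoped Matrix.Norms.L2Operator

lemma posDef_one' {n : ℕ} : (1 : Matrix (Fin n) (Fin n) ℝ).PosDef :=
  Matrix.PosDef.one

lemma norm_inv_le_of_posSemidef_sub {n : ℕ} {B : Matrix (Fin n) (Fin n) ℝ} {c : ℝ}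
    (hc : 0 < c) (h : (B - c • 1).PosSemidef) : ‖B⁻¹‖ ≤ 1 / c := by
  have hone : ((c • 1 : Matrix (Fin n) (Fin n) ℝ)).PosDef := by
    rw [Matrix.smul_one_eq_diagonal]
    exact Matrix.posDef_diagonal_iff.mpr fun _ => hc
  have hB : B.PosDef := by
    have := hone.add_posSemidef h
    rwa [add_sub_cancel] at this
  have hdet : IsUnit B.det := hB.det_pos.ne'.isUnit
  have hBB : B * B⁻¹ = 1 := Matrix.mul_nonsing_inv _ hdet
  rw [Matrix.l2_opNorm_def]
  refine ContinuousLinearMap.opNorm_le_bound _ (by positivity) fun x => ?_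
  set xv : Fin n → ℝ := (WithLp.equiv 2 (Fin n → ℝ)) x with hxv
  set yv : Fin n → ℝ := B⁻¹ *ᵥ xv with hyv
  set y : EuclideanSpace ℝ (Fin n) := (WithLp.equiv 2 (Fin n → ℝ)).symm yv with hy
  have happ : (Matrix.toEuclideanLin.trans LinearMap.toContinuousLinearMap B⁻¹) x = y := rfl
  rw [happ]
  have hBy : B *ᵥ yv = xv := by
    rw [hyv, Matrix.mulVec_mulVec, hBB, Matrix.one_mulVec]
  have hkey : 0 ≤ dotProduct yv ((B - c • 1) *ᵥ yv) := by
    simpa using h.dotProduct_mulVec_nonneg yv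
  have hkey2 : c * dotProduct yv yv ≤ dotProduct yv xv := by
    rw [Matrix.sub_mulVec, dotProduct_sub, Matrix.smul_mulVec,
      Matrix.one_mulVec, dotProduct_smul, hBy] at hkey
    simpa [smul_eq_mul] using sub_nonneg.mp hkey
  have hyy : dotProduct yv yv = ‖y‖ ^ 2 := by
    have := EuclideanSpace.inner_eq_star_dotProduct y y
    simp only [star_trivial] at this
    rw [← real_inner_self_eq_norm_sq]
    exact (this.trans (by rfl)).symm
  have hyx : dotProduct yv xv ≤ ‖y‖ * ‖x‖ := by
    have h1 : (inner ℝ y x : ℝ) = dotProduct yv xv := by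
      rw [EuclideanSpace.inner_eq_star_dotProduct, star_trivial, dotProduct_comm]; rfl
    rw [← h1]
    exact real_inner_le_norm y x
  have hc2 : c * ‖y‖ ^ 2 ≤ ‖y‖ * ‖x‖ := by
    calc c * ‖y‖ ^ 2 = c * dotProduct yv yv := by rw [hyy]
    _ ≤ dotProduct yv xv := hkey2
    _ ≤ ‖y‖ * ‖x‖ := hyx
  have hny : 0 ≤ ‖y‖ := norm_nonneg _
  have hnx : 0 ≤ ‖x‖ := norm_nonneg _
  rcases eq_or_lt_of_le hny with h0 | h0
  · rw [← h0]; positivity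
  · rw [div_mul_eq_mul_div, le_div_iff₀ hc]
    nlinarith
  
theorem stmt14 (n p : ℕ) (Y : Matrix (Fin n) (Fin p) ℝ) (δ : ℝ) (hδ : 0 < δ)
    (hmin : ∀ i, δ * p ≤ (Matrix.posSemidef_conjTranspose_mul_self Yᵀ).1.eigenvalues i) :
    ‖Y * (1 + Yᵀ * Y)⁻¹ * Yᵀ - 1‖ ≤ 1 / (1 + δ * p) := by
  set t : ℝ := δ * p with ht
  have htnn : 0 ≤ t := by positivity
  have hc : (0 : ℝ) < 1 + t := by linarith
  have hM := Matrix.posSemidef_conjTranspose_mul_self Yᵀ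
  have hMeq : Yᵀᴴ * Yᵀ = Y * Yᵀ := by
    rw [Matrix.conjTranspose_eq_transpose_of_trivial, Matrix.transpose_transpose]
  -- positive semidefiniteness of M - t • 1
  set U : Matrix (Fin n) (Fin n) ℝ := (hM.1.eigenvectorUnitary : Matrix (Fin n) (Fin n) ℝ)
    with hU
  have hUU : U * star U = 1 := Matrix.mem_unitaryGroup_iff.mp hM.1.eigenvectorUnitary.2
  have hspec := hM.1.spectral_theorem
  simp only [Unitary.conjStarAlgAut_apply, Unitary.coe_star, ← hU] at hspec
  have hSeq : Yᵀᴴ * Yᵀ - t • 1 =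
      U * Matrix.diagonal (fun i => hM.1.eigenvalues i - t) * Uᴴ := by
    have hdiag : Matrix.diagonal (fun i => hM.1.eigenvalues i - t)
        = Matrix.diagonal ((RCLike.ofReal : ℝ → ℝ) ∘ hM.1.eigenvalues) - t • 1 := by
      rw [Matrix.smul_one_eq_diagonal, ← Matrix.diagonal_sub]
      rfl
    rw [hdiag, Matrix.mul_sub, Matrix.sub_mul, ← Matrix.star_eq_conjTranspose,
      ← hspec, Matrix.mul_smul, Matrix.smul_mul, Matrix.mul_one, hUU]
  have hS : (Yᵀᴴ * Yᵀ - t • 1).PosSemidef := by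
    rw [hSeq]
    exact (Matrix.posSemidef_diagonal_iff.mpr fun i => sub_nonneg.mpr
      (hmin i)).mul_mul_conjTranspose_same U
  -- positive definiteness of A and P
  set A : Matrix (Fin n) (Fin n) ℝ := 1 + Y * Yᵀ with hA
  set P : Matrix (Fin p) (Fin p) ℝ := 1 + Yᵀ * Y with hP
  have hMpsd : (Y * Yᵀ).PosSemidef := hMeq ▸ hM
  have hPpsd : (Yᵀ * Y).PosSemidef := by
    have := Matrix.posSemidef_conjTranspose_mul_self Y
    rwa [Matrix.conjTranspose_eq_transpose_of_trivial] at this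
  have hApd : A.PosDef := posDef_one'.add_posSemidef hMpsd
  have hPpd : P.PosDef := posDef_one'.add_posSemidef hPpsd
  have hAdet : IsUnit A.det := hApd.det_pos.ne'.isUnit
  have hPdet : IsUnit P.det := hPpd.det_pos.ne'.isUnit
  -- the commutation identity
  have hcomm : Y * P = A * Y := by
    rw [hP, hA, Matrix.mul_add, Matrix.add_mul, Matrix.mul_one, Matrix.one_mul,
      Matrix.mul_assoc]
  have hswap : A⁻¹ * Y = Y * P⁻¹ := by
    have h1 : A⁻¹ * (Y * P) * P⁻¹ = A⁻¹ * (A * Y) * P⁻¹ := by rw [hcomm]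
    calc A⁻¹ * Y = A⁻¹ * Y * (P * P⁻¹) := by
          rw [Matrix.mul_nonsing_inv _ hPdet, Matrix.mul_one]
      _ = A⁻¹ * (Y * P) * P⁻¹ := by simp only [Matrix.mul_assoc]
      _ = A⁻¹ * (A * Y) * P⁻¹ := h1
      _ = (A⁻¹ * A) * Y * P⁻¹ := by simp only [Matrix.mul_assoc]
      _ = Y * P⁻¹ := by
          rw [Matrix.nonsing_inv_mul _ hAdet, Matrix.one_mul]
  -- rewrite the target matrix as -A⁻¹
  have hmain : Y * P⁻¹ * Yᵀ - 1 = -(A⁻¹) := by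
    have hid : A⁻¹ * A = 1 := Matrix.nonsing_inv_mul _ hAdet
    calc Y * P⁻¹ * Yᵀ - 1 = A⁻¹ * Y * Yᵀ - A⁻¹ * A := by rw [hswap, hid]
      _ = A⁻¹ * (Y * Yᵀ) - A⁻¹ * A := by rw [Matrix.mul_assoc]
      _ = A⁻¹ * (Y * Yᵀ - A) := by rw [Matrix.mul_sub]
      _ = A⁻¹ * (-1) := by rw [hA]; congr 1; abel
      _ = -(A⁻¹) := by rw [Matrix.mul_neg, Matrix.mul_one]
  rw [hmain, norm_neg]
  refine norm_inv_le_of_posSemidef_sub hc ?_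
  have : A - (1 + t) • 1 = Yᵀᴴ * Yᵀ - t • 1 := by
    rw [hMeq, hA, add_smul, one_smul]
    abel
  rw [this]
  exact hS
end

section
/- For the real Gamma function, and any fixed a > 0, lim_{x→∞} Γ(x + a)/(Γ(x)·xᵃ) = 1. -/
open Real Filter Topology

lemma gamma_ratio_base (a : ℝ) (h0 : 0 < a) (h1 : a < 1) :
    Tendsto (fun x : ℝ => Real.Gamma (x + a) / (Real.Gamma x * x ^ a))
      atTop (𝓝 1) := by
  have hlow : Tendsto (fun x : ℝ => (x / (x + a)) ^ (1 - a)) atTop (𝓝 1) := by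
    have h1' : Tendsto (fun x : ℝ => x / (x + a)) atTop (𝓝 1) := by
      have : Tendsto (fun x : ℝ => a / (x + a)) atTop (𝓝 0) :=
        tendsto_const_nhds.div_atTop (tendsto_atTop_add_const_right _ a tendsto_id)
      have h2 : Tendsto (fun x : ℝ => 1 - a / (x + a)) atTop (𝓝 (1 - 0)) :=
        tendsto_const_nhds.sub this
      rw [sub_zero] at h2
      refine h2.congr' ?_
      filter_upwards [eventually_gt_atTop 0] with x hx
      have hxa : x + a ≠ 0 := by positivity
      field_simp
      ring
    have := h1'.rpow (tendsto_const_nhds : Tendsto (fun _ : ℝ => (1 - a)) atTop (𝓝 (1 - a)))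
      (Or.inl one_ne_zero)
    simpa using this
  refine tendsto_of_tendsto_of_tendsto_of_le_of_le' hlow tendsto_const_nhds ?_ ?_
  · -- lower bound
    filter_upwards [eventually_gt_atTop 0] with x hx
    have hxa : 0 < x + a := by positivity
    have key : Real.Gamma (x + 1) ≤ Real.Gamma (x + a) * (x + a) ^ (1 - a) := by
      have := Real.Gamma_mul_add_mul_le_rpow_Gamma_mul_rpow_Gamma hxa
        (by positivity : (0:ℝ) < x + a + 1) h0 (by linarith : (0:ℝ) < 1 - a)
        (by ring)
      have harg : a * (x + a) + (1 - a) * (x + a + 1) = x + 1 := by ring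
      rw [harg] at this
      calc Real.Gamma (x + 1) ≤ Real.Gamma (x + a) ^ a * Real.Gamma (x + a + 1) ^ (1 - a) :=
            this
        _ = Real.Gamma (x + a) * (x + a) ^ (1 - a) := by
            rw [Real.Gamma_add_one (by positivity), Real.mul_rpow hxa.le
              (Real.Gamma_pos_of_pos hxa).le,
              show Real.Gamma (x+a) ^ a * ((x+a) ^ (1-a) * Real.Gamma (x+a) ^ (1-a))
                = (Real.Gamma (x+a) ^ a * Real.Gamma (x+a) ^ (1-a)) * (x+a) ^ (1-a) by ring,
              ← Real.rpow_add (Real.Gamma_pos_of_pos hxa)]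
            simp
    rw [Real.Gamma_add_one hx.ne'] at key
    have hGx : 0 < Real.Gamma x := Real.Gamma_pos_of_pos hx
    rw [div_rpow hx.le hxa.le, div_le_div_iff₀ (by positivity) (by positivity)]
    have hxx : x ^ (1 - a) * x ^ a = x := by
      rw [← Real.rpow_add hx]; simp
    calc x ^ (1 - a) * (Real.Gamma x * x ^ a)
        = (x ^ (1 - a) * x ^ a) * Real.Gamma x := by ring
      _ = x * Real.Gamma x := by rw [hxx]
      _ ≤ Real.Gamma (x + a) * (x + a) ^ (1 - a) := key
  · -- upper bound
    filter_upwards [eventually_gt_atTop 0] with x hx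
    have hGx : 0 < Real.Gamma x := Real.Gamma_pos_of_pos hx
    have key : Real.Gamma (x + a) ≤ Real.Gamma x * x ^ a := by
      have := Real.Gamma_mul_add_mul_le_rpow_Gamma_mul_rpow_Gamma hx
        (by positivity : (0:ℝ) < x + 1) (by linarith : (0:ℝ) < 1 - a) h0 (by ring)
      have harg : (1 - a) * x + a * (x + 1) = x + a := by ring
      rw [harg] at this
      calc Real.Gamma (x + a) ≤ Real.Gamma x ^ (1 - a) * Real.Gamma (x + 1) ^ a := this
        _ = Real.Gamma x * x ^ a := by
            rw [Real.Gamma_add_one hx.ne', Real.mul_rpow hx.le hGx.le,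
              show Real.Gamma x ^ (1-a) * (x ^ a * Real.Gamma x ^ a)
                = (Real.Gamma x ^ (1-a) * Real.Gamma x ^ a) * x ^ a by ring,
              ← Real.rpow_add hGx]
            simp
    rw [div_le_one (by positivity)]
    exact key

lemma gamma_ratio_one :
    Tendsto (fun x : ℝ => Real.Gamma (x + 1) / (Real.Gamma x * x ^ (1:ℝ)))
      atTop (𝓝 1) := by
  refine tendsto_const_nhds.congr' ?_
  filter_upwards [eventually_gt_atTop 0] with x hx
  rw [Real.Gamma_add_one hx.ne', Real.rpow_one]
  field_simp [(Real.Gamma_pos_of_pos hx).ne']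

lemma gamma_ratio_step (a : ℝ) (ha : 0 < a)
    (h : Tendsto (fun x : ℝ => Real.Gamma (x + a) / (Real.Gamma x * x ^ a))
      atTop (𝓝 1)) :
    Tendsto (fun x : ℝ => Real.Gamma (x + (a + 1)) / (Real.Gamma x * x ^ (a + 1)))
      atTop (𝓝 1) := by
  have hfrac : Tendsto (fun x : ℝ => (x + a) / x) atTop (𝓝 1) := by
    have : Tendsto (fun x : ℝ => a / x) atTop (𝓝 0) :=
      tendsto_const_nhds.div_atTop tendsto_id
    have h2 : Tendsto (fun x : ℝ => 1 + a / x) atTop (𝓝 (1 + 0)) :=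
      tendsto_const_nhds.add this
    rw [add_zero] at h2
    refine h2.congr' ?_
    filter_upwards [eventually_gt_atTop 0] with x hx
    field_simp
  have := h.mul hfrac
  rw [mul_one] at this
  refine this.congr' ?_
  filter_upwards [eventually_gt_atTop 0] with x hx
  have hGx : 0 < Real.Gamma x := Real.Gamma_pos_of_pos hx
  have hxa : 0 < x + a := by positivity
  rw [show x + (a + 1) = (x + a) + 1 by ring, Real.Gamma_add_one hxa.ne',
    Real.rpow_add hx, Real.rpow_one]
  field_simp

lemma gamma_ratio_bound (n : ℕ) : ∀ a : ℝ, 0 < a → a ≤ n →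
    Tendsto (fun x : ℝ => Real.Gamma (x + a) / (Real.Gamma x * x ^ a))
      atTop (𝓝 1) := by
  induction n with
  | zero => intro a h0 h1; exact absurd (h0.trans_le h1) (by norm_num)
  | succ n ih =>
    intro a h0 h1
    rcases lt_trichotomy a 1 with h | h | h
    · exact gamma_ratio_base a h0 h
    · subst h; exact gamma_ratio_one
    · have h0' : 0 < a - 1 := by linarith
      have h1' : a - 1 ≤ n := by push_cast at h1 ⊢; linarith
      have := gamma_ratio_step (a - 1) h0' (ih (a - 1) h0' h1')
      simpa using this

theorem stmt19 (a : ℝ) (ha : 0 < a) :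
    Tendsto (fun x : ℝ => Real.Gamma (x + a) / (Real.Gamma x * x ^ a))
      atTop (𝓝 1) := by
  obtain ⟨n, hn⟩ := exists_nat_ge a
  exact gamma_ratio_bound n a ha hn
end
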